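/- Let Y ∈ ℝ^n, X ∈ ℝ^{n×p} with X′X invertible, Λ = (λ₁,…,λ_p) with λ₁ ≥ … ≥ λ_p ≥ 0. Let π* be any minimizer over C_Λ of π ↦ (X′Y − π)′(X′X)^{-1}(X′Y − π), set β* = (X′X)^{-1}(X′Y − π*), and let τ be a permutation of {1,…,p} with |β*_{τ(1)}| ≥ … ≥ |β*_{τ(p)}|. If there is k ∈ {2,…,p} with Σ_{i=1}^{k-1} |π*_{τ(i)}| < Σ_{i=1}^{k-1} λ_i and |π*_{τ(k)}| > 0, then |β*_{τ(k-1)}| = |β*_{τ(k)}|. -/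

import Mathlib

open Matrix

/-- The unit ball `C_Λ` of the dual SLOPE norm: for every `k`, the sum of the `k`
largest values among `|π j|` is at most the sum of the first `k` entries of `Λ`. -/
def dualBall {p : ℕ} (Λ : Fin p → ℝ) : Set (Fin p → ℝ) :=
  {π | ∀ S : Finset (Fin p),
    ∑ j ∈ S, |π j| ≤ ∑ j ∈ Finset.univ.filter (fun j : Fin p => (j : ℕ) < S.card), Λ j}

lemma slope_card_filter_lt {p m : ℕ} (hm : m ≤ p) :
    (Finset.univ.filter (fun j : Fin p => (j:ℕ) < m)).card = m := by
  have : Finset.univ.filter (fun j : Fin p => (j:ℕ) < m)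
      = Finset.map ⟨Fin.castLE hm, Fin.castLE_injective hm⟩ Finset.univ := by
    ext j
    simp only [Finset.mem_filter, Finset.mem_univ, true_and, Finset.mem_map,
      Function.Embedding.coeFn_mk]
    constructor
    · intro hj; exact ⟨⟨j, hj⟩, rfl⟩
    · rintro ⟨a, rfl⟩; exact a.isLt
  rw [this]; simp

lemma slope_antitone_sum_le {p : ℕ} (Λ : Fin p → ℝ) (hΛ : Antitone Λ) (h0 : ∀ i, 0 ≤ Λ i)
    (T : Finset (Fin p)) :
    ∑ j ∈ T, Λ j ≤ ∑ j ∈ Finset.univ.filter (fun j : Fin p => (j : ℕ) < T.card), Λ j := by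
  have key : ∀ N : ℕ, ∀ T : Finset (Fin p), (∑ j ∈ T, (j:ℕ)) < N →
      ∑ j ∈ T, Λ j ≤ ∑ j ∈ Finset.univ.filter (fun j : Fin p => (j : ℕ) < T.card), Λ j := by
    intro N
    induction N with
    | zero => intro T h; omega
    | succ N ih =>
      intro T hT
      by_cases hsub : T ⊆ Finset.univ.filter (fun j : Fin p => (j : ℕ) < T.card)
      · exact Finset.sum_le_sum_of_subset_of_nonneg hsub (fun i _ _ => h0 i)
      · obtain ⟨a, haT, ha⟩ := Finset.not_subset.mp hsub
        have ha' : T.card ≤ (a:ℕ) := by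
          by_contra h
          exact ha (Finset.mem_filter.mpr ⟨Finset.mem_univ a, by omega⟩)
        have hcp : T.card ≤ p := le_of_lt (lt_of_le_of_lt ha' a.isLt)
        have hb : ∃ b : Fin p, (b:ℕ) < T.card ∧ b ∉ T := by
          by_contra h
          push_neg at h
          have hsub2 : Finset.univ.filter (fun j : Fin p => (j : ℕ) < T.card) ⊆ T := by
            intro j hj
            exact h j (Finset.mem_filter.mp hj).2
          have hcard := slope_card_filter_lt (p := p) hcp
          have := Finset.eq_of_subset_of_card_le hsub2 (le_of_eq hcard.symm)
          rw [← this] at haT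
          have := (Finset.mem_filter.mp haT).2
          omega
        obtain ⟨b, hbc, hbT⟩ := hb
        set T' := insert b (T.erase a) with hT'
        have hbe : b ∉ T.erase a := fun h => hbT (Finset.mem_of_mem_erase h)
        have hcard' : T'.card = T.card := by
          rw [hT', Finset.card_insert_of_notMem hbe, Finset.card_erase_of_mem haT]
          have : 1 ≤ T.card := Finset.card_pos.mpr ⟨a, haT⟩
          omega
        have hba : (b:ℕ) < (a:ℕ) := lt_of_lt_of_le hbc ha'
        have hsum_nat : ∑ j ∈ T', (j:ℕ) < ∑ j ∈ T, (j:ℕ) := by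
          rw [hT', Finset.sum_insert hbe, ← Finset.sum_erase_add T _ haT]
          omega
        have hsum_le : ∑ j ∈ T, Λ j ≤ ∑ j ∈ T', Λ j := by
          rw [hT', Finset.sum_insert hbe, ← Finset.sum_erase_add T _ haT]
          have : Λ a ≤ Λ b := hΛ (by exact_mod_cast le_of_lt hba : b ≤ a)
          linarith
        have := ih T' (by omega)
        rw [hcard'] at this
        linarith
  exact key _ T (Nat.lt_succ_self _)

lemma slope_sign_mul_self (x : ℝ) : Real.sign x * x = |x| := by
  rcases lt_trichotomy x 0 with h | h | h
  · rw [Real.sign_of_neg h, abs_of_neg h]; ring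
  · simp [h]
  · rw [Real.sign_of_pos h, abs_of_pos h]; ring

lemma slope_abs_sign_le_one (x : ℝ) : |Real.sign x| ≤ 1 := by
  rcases lt_trichotomy x 0 with h | h | h
  · simp [Real.sign_of_neg h]
  · simp [h]
  · simp [Real.sign_of_pos h]

lemma slope_dual_opt {p : ℕ} (A : Matrix (Fin p) (Fin p) ℝ) (hA : Aᵀ = A)
    (c πstar β : Fin p → ℝ) (hβ : β = A *ᵥ (c - πstar)) (Λ : Fin p → ℝ)
    (hmemstar : πstar ∈ dualBall Λ)
    (hmin : ∀ π ∈ dualBall Λ,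
      (c - πstar) ⬝ᵥ (A *ᵥ (c - πstar)) ≤ (c - π) ⬝ᵥ (A *ᵥ (c - π)))
    (π : Fin p → ℝ) (hπ : π ∈ dualBall Λ) : β ⬝ᵥ π ≤ β ⬝ᵥ πstar := by
  set Δ : Fin p → ℝ := π - πstar with hΔ
  set w : Fin p → ℝ := c - πstar with hw
  set q : ℝ := Δ ⬝ᵥ (A *ᵥ Δ) with hq
  have hseg : ∀ t : ℝ, 0 ≤ t → t ≤ 1 → (πstar + t • Δ) ∈ dualBall Λ := by
    intro t ht0 ht1 S
    have h1 : ∑ j ∈ S, |(πstar + t • Δ) j|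
        ≤ (1 - t) * ∑ j ∈ S, |πstar j| + t * ∑ j ∈ S, |π j| := by
      rw [Finset.mul_sum, Finset.mul_sum, ← Finset.sum_add_distrib]
      apply Finset.sum_le_sum
      intro j _
      have he : (πstar + t • Δ) j = (1 - t) * πstar j + t * π j := by
        simp [hΔ]; ring
      rw [he]
      calc |(1 - t) * πstar j + t * π j| ≤ |(1-t) * πstar j| + |t * π j| := abs_add_le _ _
        _ = (1-t) * |πstar j| + t * |π j| := by
            rw [abs_mul, abs_mul, abs_of_nonneg (by linarith), abs_of_nonneg ht0]
    have h2 := hmemstar S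
    have h3 := hπ S
    calc ∑ j ∈ S, |(πstar + t • Δ) j|
        ≤ (1 - t) * ∑ j ∈ S, |πstar j| + t * ∑ j ∈ S, |π j| := h1
      _ ≤ (1 - t) * (∑ j ∈ Finset.univ.filter (fun j : Fin p => (j : ℕ) < S.card), Λ j)
          + t * (∑ j ∈ Finset.univ.filter (fun j : Fin p => (j : ℕ) < S.card), Λ j) := by
          have := mul_le_mul_of_nonneg_left h2 (by linarith : (0:ℝ) ≤ 1 - t)
          have := mul_le_mul_of_nonneg_left h3 ht0
          nlinarith
      _ = _ := by ring
  have hexp : ∀ t : ℝ, (c - (πstar + t • Δ)) ⬝ᵥ (A *ᵥ (c - (πstar + t • Δ)))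
      = w ⬝ᵥ (A *ᵥ w) - 2 * t * (β ⬝ᵥ Δ) + t ^ 2 * q := by
    intro t
    have hrw : c - (πstar + t • Δ) = w - t • Δ := by
      rw [hw]; ext j; simp; ring
    rw [hrw]
    have cross1 : Δ ⬝ᵥ (A *ᵥ w) = β ⬝ᵥ Δ := by
      rw [hβ, dotProduct_comm]
    have cross2 : w ⬝ᵥ (A *ᵥ Δ) = β ⬝ᵥ Δ := by
      rw [Matrix.dotProduct_mulVec, ← Matrix.mulVec_transpose, hA, ← hβ]
    rw [sub_dotProduct, Matrix.mulVec_sub, dotProduct_sub, dotProduct_sub,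
      Matrix.mulVec_smul, dotProduct_smul, dotProduct_smul, smul_dotProduct,
      smul_dotProduct, cross1, cross2]
    simp only [smul_eq_mul, hq]
    ring
  by_contra hcon
  push_neg at hcon
  have hd : 0 < β ⬝ᵥ Δ := by
    have : β ⬝ᵥ Δ = β ⬝ᵥ π - β ⬝ᵥ πstar := by
      rw [hΔ, dotProduct_sub]
    linarith
  set d : ℝ := β ⬝ᵥ Δ with hdd
  set t : ℝ := min 1 (d / (|q| + d)) with htdef
  have hqd : 0 < |q| + d := by positivity
  have ht0 : 0 < t := lt_min one_pos (div_pos hd hqd)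
  have ht1 : t ≤ 1 := min_le_left _ _
  have htq : t * |q| < d := by
    have h1 : t ≤ d / (|q| + d) := min_le_right _ _
    have h2 : t * |q| ≤ (d / (|q| + d)) * |q| :=
      mul_le_mul_of_nonneg_right h1 (abs_nonneg q)
    have h3 : (d / (|q| + d)) * |q| < d := by
      rw [div_mul_eq_mul_div, div_lt_iff₀ hqd]
      nlinarith [abs_nonneg q]
    linarith
  have hm := hmin _ (hseg t (le_of_lt ht0) ht1)
  rw [hexp t] at hm
  have h4 : 2 * t * d ≤ t ^ 2 * q := by rw [hw] at hm; linarith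
  have h5 : t ^ 2 * q ≤ t ^ 2 * |q| := by
    apply mul_le_mul_of_nonneg_left (le_abs_self q) (by positivity)
  have h6 : t ^ 2 * |q| = t * (t * |q|) := by ring
  nlinarith

lemma slope_sum_filter_eq {p : ℕ} (f : Fin p → ℝ) (m : ℕ) (hm : m < p) :
    ∑ j ∈ Finset.univ.filter (fun j : Fin p => (j:ℕ) ≤ m), f j
      = ∑ k ∈ Finset.range (m+1), (if h : k < p then f ⟨k, h⟩ else 0) := by
  rw [Finset.sum_filter]
  have e1 : ∑ j : Fin p, (if (j:ℕ) ≤ m then f j else 0)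
      = ∑ k ∈ Finset.range p,
        (fun k => if k ≤ m then (if h : k < p then f ⟨k, h⟩ else 0) else 0) k := by
    rw [← Fin.sum_univ_eq_sum_range]
    apply Finset.sum_congr rfl
    intro j _
    by_cases hj : (j:ℕ) ≤ m <;> simp [hj, j.isLt]
  rw [e1]
  rw [← Finset.sum_filter]
  congr 1
  ext k
  simp only [Finset.mem_filter, Finset.mem_range]
  omega

/-- If `π*` minimizes `π ↦ (X'Y - π)'(X'X)⁻¹(X'Y - π)` over `C_Λ`,
`β* = (X'X)⁻¹(X'Y - π*)` and `τ` sorts `|β*|` decreasingly, then whenever the sum of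
`|π*∘τ|` over the first `k-1` positions is strictly below the corresponding sum of `Λ`
and `|π*_{τ(k)}| > 0`, necessarily `|β*_{τ(k-1)}| = |β*_{τ(k)}|`.
(Here, in 0-based indexing, position `i` plays the role of `k-1` and `i+1` that of `k`;
the first `k-1` positions are `{j : j ≤ i}`.) -/
theorem dual_minimizer_cluster {n p : ℕ}
    (X : Matrix (Fin n) (Fin p) ℝ) (Y : Fin n → ℝ) (hX : IsUnit (Xᵀ * X).det)
    (Λ : Fin p → ℝ) (hΛanti : Antitone Λ) (hΛnonneg : ∀ i, 0 ≤ Λ i)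
    (πstar : Fin p → ℝ) (hmem : πstar ∈ dualBall Λ)
    (hmin : ∀ π ∈ dualBall Λ,
      (Xᵀ *ᵥ Y - πstar) ⬝ᵥ ((Xᵀ * X)⁻¹ *ᵥ (Xᵀ *ᵥ Y - πstar)) ≤
        (Xᵀ *ᵥ Y - π) ⬝ᵥ ((Xᵀ * X)⁻¹ *ᵥ (Xᵀ *ᵥ Y - π)))
    (βstar : Fin p → ℝ) (hβ : βstar = (Xᵀ * X)⁻¹ *ᵥ (Xᵀ *ᵥ Y - πstar))
    (τ : Equiv.Perm (Fin p))
    (hτ : ∀ i j : Fin p, i ≤ j → |βstar (τ j)| ≤ |βstar (τ i)|) :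
    ∀ i : Fin p, ∀ h : (i : ℕ) + 1 < p,
      (∑ j ∈ Finset.univ.filter (fun j : Fin p => j ≤ i), |πstar (τ j)|)
          < (∑ j ∈ Finset.univ.filter (fun j : Fin p => j ≤ i), Λ j) →
      0 < |πstar (τ ⟨(i : ℕ) + 1, h⟩)| →
      |βstar (τ i)| = |βstar (τ ⟨(i : ℕ) + 1, h⟩)| := by
  intro i h hslack _hpos
  by_contra hne
  have hlt : |βstar (τ ⟨(i:ℕ)+1, h⟩)| < |βstar (τ i)| :=
    lt_of_le_of_ne (hτ i ⟨(i:ℕ)+1, h⟩ (by simp [Fin.le_def])) (fun he => hne he.symm)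
  -- symmetry of A
  set A : Matrix (Fin p) (Fin p) ℝ := (Xᵀ * X)⁻¹ with hAdef
  have hA : Aᵀ = A := by
    rw [hAdef, Matrix.transpose_nonsing_inv, Matrix.transpose_mul,
      Matrix.transpose_transpose]
  -- the comparison vector π₀
  set π₀ : Fin p → ℝ := fun k => Real.sign (βstar k) * Λ (τ.symm k) with hπ₀
  have hπ₀mem : π₀ ∈ dualBall Λ := by
    intro S
    have step1 : ∑ k ∈ S, |π₀ k| ≤ ∑ k ∈ S, Λ (τ.symm k) := by
      apply Finset.sum_le_sum
      intro k _
      rw [hπ₀, abs_mul, abs_of_nonneg (hΛnonneg _)]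
      calc |Real.sign (βstar k)| * Λ (τ.symm k)
          ≤ 1 * Λ (τ.symm k) :=
            mul_le_mul_of_nonneg_right (slope_abs_sign_le_one _) (hΛnonneg _)
        _ = Λ (τ.symm k) := one_mul _
    have step2 : ∑ k ∈ S, Λ (τ.symm k) = ∑ j ∈ S.image τ.symm, Λ j :=
      (Finset.sum_image (fun x _ y _ hxy => τ.symm.injective hxy)).symm
    have step3 := slope_antitone_sum_le Λ hΛanti hΛnonneg (S.image τ.symm)
    rw [Finset.card_image_of_injective _ τ.symm.injective] at step3
    calc ∑ k ∈ S, |π₀ k| ≤ ∑ k ∈ S, Λ (τ.symm k) := step1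
      _ = ∑ j ∈ S.image τ.symm, Λ j := step2
      _ ≤ _ := step3
  have hopt := slope_dual_opt A hA (Xᵀ *ᵥ Y) πstar βstar hβ Λ hmem hmin π₀ hπ₀mem
  -- lhs of hopt
  have hlhs : βstar ⬝ᵥ π₀ = ∑ j : Fin p, |βstar (τ j)| * Λ j := by
    rw [dotProduct]
    rw [← Equiv.sum_comp τ (fun k => βstar k * π₀ k)]
    apply Finset.sum_congr rfl
    intro j _
    rw [hπ₀]
    simp only [Equiv.symm_apply_apply]
    rw [show βstar (τ j) * (Real.sign (βstar (τ j)) * Λ j)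
        = (Real.sign (βstar (τ j)) * βstar (τ j)) * Λ j by ring,
      slope_sign_mul_self]
  -- rhs of hopt
  have hrhs : βstar ⬝ᵥ πstar ≤ ∑ j : Fin p, |βstar (τ j)| * |πstar (τ j)| := by
    rw [dotProduct, ← Equiv.sum_comp τ (fun k => βstar k * πstar k)]
    apply Finset.sum_le_sum
    intro j _
    calc βstar (τ j) * πstar (τ j) ≤ |βstar (τ j) * πstar (τ j)| := le_abs_self _
      _ = |βstar (τ j)| * |πstar (τ j)| := abs_mul _ _
  have hkey : ∑ j : Fin p, |βstar (τ j)| * (Λ j - |πstar (τ j)|) ≤ 0 := by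
    have : ∑ j : Fin p, |βstar (τ j)| * (Λ j - |πstar (τ j)|)
        = ∑ j : Fin p, |βstar (τ j)| * Λ j
          - ∑ j : Fin p, |βstar (τ j)| * |πstar (τ j)| := by
      rw [← Finset.sum_sub_distrib]
      apply Finset.sum_congr rfl
      intro j _; ring
    rw [this]
    linarith
  -- ℕ-indexed versions for Abel summation
  set gf : Fin p → ℝ := fun j => Λ j - |πstar (τ j)| with hgf
  set G : ℕ → ℝ := fun m => if hm : m < p then gf ⟨m, hm⟩ else 0 with hG
  set V : ℕ → ℝ := fun m => if hm : m < p then |βstar (τ ⟨m, hm⟩)| else 0 with hV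
  have hVnonneg : ∀ m, 0 ≤ V m := by
    intro m
    by_cases hm : m < p
    · simp only [hV, dif_pos hm]
      exact abs_nonneg _
    · simp only [hV, dif_neg hm]
      exact le_refl 0
  have hVanti : ∀ m, V (m+1) ≤ V m := by
    intro m
    by_cases h1 : m + 1 < p
    · have h2 : m < p := by omega
      rw [hV]
      simp only [dif_pos h1, dif_pos h2]
      exact hτ ⟨m, h2⟩ ⟨m+1, h1⟩ (by simp [Fin.le_def])
    · rw [hV]
      simp only [dif_neg h1]
      exact hVnonneg m
  -- partial sums of G are nonnegative
  have hGsum : ∀ m, m < p → ∑ k ∈ Finset.range (m+1), G k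
      = (∑ j ∈ Finset.univ.filter (fun j : Fin p => (j:ℕ) ≤ m), Λ j)
        - ∑ j ∈ Finset.univ.filter (fun j : Fin p => (j:ℕ) ≤ m), |πstar (τ j)| := by
    intro m hm
    rw [← Finset.sum_sub_distrib, ← slope_sum_filter_eq gf m hm]
  have hcons : ∀ m, m < p →
      ∑ j ∈ Finset.univ.filter (fun j : Fin p => (j:ℕ) ≤ m), |πstar (τ j)|
        ≤ ∑ j ∈ Finset.univ.filter (fun j : Fin p => (j:ℕ) ≤ m), Λ j := by
    intro m hm
    have hfe : Finset.univ.filter (fun j : Fin p => (j:ℕ) ≤ m)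
        = Finset.univ.filter (fun j : Fin p => (j:ℕ) < m + 1) := by
      ext j; simp
    have hcardF : (Finset.univ.filter (fun j : Fin p => (j:ℕ) ≤ m)).card = m + 1 := by
      rw [hfe, slope_card_filter_lt hm]
    have hc := hmem ((Finset.univ.filter (fun j : Fin p => (j:ℕ) ≤ m)).image τ)
    rw [Finset.sum_image (fun x _ y _ hxy => τ.injective hxy),
      Finset.card_image_of_injective _ τ.injective, hcardF, ← hfe] at hc
    exact hc
  have hSnonneg : ∀ m, m < p → 0 ≤ ∑ k ∈ Finset.range (m+1), G k := by
    intro m hm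
    rw [hGsum m hm]
    linarith [hcons m hm]
  -- strict positivity at i, using the slack hypothesis
  have hfilter_i : Finset.univ.filter (fun j : Fin p => j ≤ i)
      = Finset.univ.filter (fun j : Fin p => (j:ℕ) ≤ (i:ℕ)) := by
    ext j
    simp only [Finset.mem_filter, Finset.mem_univ, true_and, Fin.le_def]
  have hSi : 0 < ∑ k ∈ Finset.range ((i:ℕ)+1), G k := by
    rw [hGsum (i:ℕ) i.isLt]
    rw [hfilter_i] at hslack
    linarith
  -- Abel summation
  have habel := Finset.sum_range_by_parts V G p
  simp only [smul_eq_mul] at habel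
  have hsum_eq : ∑ m ∈ Finset.range p, V m * G m
      = ∑ j : Fin p, |βstar (τ j)| * (Λ j - |πstar (τ j)|) := by
    rw [← Fin.sum_univ_eq_sum_range (fun m => V m * G m) p]
    apply Finset.sum_congr rfl
    intro j _
    rw [hV, hG]
    simp only [dif_pos j.isLt, Fin.eta, hgf]
  have hp0 : 0 < p := by omega
  have hterm1 : 0 ≤ V (p-1) * ∑ k ∈ Finset.range p, G k := by
    apply mul_nonneg (hVnonneg _)
    have := hSnonneg (p-1) (by omega)
    rwa [show p - 1 + 1 = p by omega] at this
  have himem : (i:ℕ) ∈ Finset.range (p-1) := by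
    simp only [Finset.mem_range]; omega
  have hfi : (V ((i:ℕ)+1) - V (i:ℕ)) * ∑ k ∈ Finset.range ((i:ℕ)+1), G k < 0 := by
    apply mul_neg_of_neg_of_pos _ hSi
    have hVi : V (i:ℕ) = |βstar (τ i)| := by
      rw [hV]; simp only [dif_pos i.isLt, Fin.eta]
    have hVi1 : V ((i:ℕ)+1) = |βstar (τ ⟨(i:ℕ)+1, h⟩)| := by
      rw [hV]; simp only [dif_pos h]
    rw [hVi, hVi1]
    linarith
  have hsumf : ∑ m ∈ Finset.range (p-1),
      (V (m+1) - V m) * ∑ k ∈ Finset.range (m+1), G k < 0 := by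
    rw [← Finset.sum_erase_add _ _ himem]
    have hrest : ∑ m ∈ (Finset.range (p-1)).erase (i:ℕ),
        (V (m+1) - V m) * ∑ k ∈ Finset.range (m+1), G k ≤ 0 := by
      apply Finset.sum_nonpos
      intro m hm
      have hm' : m < p - 1 := Finset.mem_range.mp (Finset.mem_of_mem_erase hm)
      have h1 : V (m+1) - V m ≤ 0 := by linarith [hVanti m]
      have h2 : 0 ≤ ∑ k ∈ Finset.range (m+1), G k := hSnonneg m (by omega)
      exact mul_nonpos_iff.mpr (Or.inr ⟨h1, h2⟩)
    linarith
  have hpos_total : 0 < ∑ m ∈ Finset.range p, V m * G m := by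
    rw [habel]
    linarith
  rw [hsum_eq] at hpos_total
  linarith
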